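/- The standard middle-thirds Cantor set has Hausdorff dimension log 2 / log 3, and more generally the self-similar Cantor set generated by the two contractions f₀(x) = a·x and f₁(x) = a·x + (1-a) with 0 < a < 1/2 has Hausdorff dimension log 2 / log(1/a). -/

import Mathlib

open Set MeasureTheory
open scoped ENNReal NNReal

namespace CantorStmt11

attribute [local instance] Classical.propDecidable

noncomputable section

/-- left endpoint of the cylinder interval coded by `w`. -/
def ep (a : ℝ) {n : ℕ} (w : Fin n → Bool) : ℝ :=
  ∑ i : Fin n, (if w i then (1 - a) else 0) * a ^ (i : ℕ)

def J (a : ℝ) {n : ℕ} (w : Fin n → Bool) : Set ℝ := Set.Icc (ep a w) (ep a w + a ^ n)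

variable {a : ℝ} (ha0 : 0 < a) (ha : a < 1 / 2)

lemma geom (n : ℕ) : ∑ i ∈ Finset.range n, (1 - a) * a ^ i = 1 - a ^ n := by
  induction n with
  | zero => simp
  | succ n ih => rw [Finset.sum_range_succ, ih]; ring

include ha0 ha in
lemma ep_nonneg {n : ℕ} (w : Fin n → Bool) : 0 ≤ ep a w := by
  refine Finset.sum_nonneg fun i _ => ?_
  have : (0:ℝ) ≤ a ^ (i:ℕ) := pow_nonneg ha0.le _
  split <;> nlinarith

include ha0 ha in
lemma ep_add_le {n : ℕ} (w : Fin n → Bool) : ep a w + a ^ n ≤ 1 := by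
  have h1 : ep a w ≤ ∑ i ∈ Finset.range n, (1 - a) * a ^ i := by
    rw [← Fin.sum_univ_eq_sum_range (fun i => (1 - a) * a ^ i) n, ep]
    refine Finset.sum_le_sum fun i _ => ?_
    have : (0:ℝ) ≤ a ^ (i:ℕ) := pow_nonneg ha0.le _
    split <;> nlinarith
  rw [geom] at h1; linarith

lemma ep_cons {n : ℕ} (b : Bool) (w : Fin n → Bool) :
    ep a (Fin.cons b w) = (if b then (1 - a) else 0) + a * ep a w := by
  rw [ep, Fin.sum_univ_succ, ep, Finset.mul_sum]
  simp only [Fin.cons_zero, Fin.cons_succ, Fin.val_zero, pow_zero, mul_one]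
  congr 1
  exact Finset.sum_congr rfl fun i _ => by rw [Fin.val_succ, pow_succ]; ring

lemma ep_snoc {n : ℕ} (w : Fin (n + 1) → Bool) :
    ep a w = ep a (Fin.init w) + (if w (Fin.last n) then (1 - a) else 0) * a ^ n := by
  rw [ep, Fin.sum_univ_castSucc]
  rfl

include ha0 ha in
lemma J_init_subset {n : ℕ} (w : Fin (n + 1) → Bool) : J a w ⊆ J a (Fin.init w) := by
  have hsn := ep_snoc (a := a) w
  have hpow : (0:ℝ) ≤ a ^ n := pow_nonneg ha0.le n
  have hps := pow_succ a n
  rcases Bool.eq_false_or_eq_true (w (Fin.last n)) with h | h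
  · rw [h] at hsn; simp at hsn
    have h1 : ep a (Fin.init w) ≤ ep a w := by nlinarith
    have h2 : ep a w + a ^ (n+1) ≤ ep a (Fin.init w) + a ^ n := by nlinarith
    exact Set.Icc_subset_Icc h1 h2
  · rw [h] at hsn; simp at hsn
    have h1 : ep a (Fin.init w) ≤ ep a w := by nlinarith
    have h2 : ep a w + a ^ (n+1) ≤ ep a (Fin.init w) + a ^ n := by nlinarith
    exact Set.Icc_subset_Icc h1 h2

include ha0 ha in
lemma J_restrict {m : ℕ} : ∀ (k : ℕ) (w : Fin (m + k) → Bool),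
    J a w ⊆ J a (fun i : Fin m => w (Fin.castLE (Nat.le_add_right m k) i)) := by
  intro k
  induction k with
  | zero =>
    intro w
    have : (fun i : Fin m => w (Fin.castLE (Nat.le_add_right m 0) i)) = w := by
      funext i; congr 1
    rw [this]
  | succ k ih =>
    intro w
    refine (J_init_subset ha0 ha w).trans ?_
    have h2 := ih (Fin.init w)
    have : (fun i : Fin m => Fin.init w (Fin.castLE (Nat.le_add_right m k) i)) =
        (fun i : Fin m => w (Fin.castLE (Nat.le_add_right m (k+1)) i)) := by
      funext i; unfold Fin.init; congr 1
    rwa [this] at h2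

section withC

variable {C : Set ℝ} (hsub : C ⊆ Set.Icc 0 1)
  (hself : C = (fun x => a * x) '' C ∪ (fun x => a * x + (1 - a)) '' C)

include hsub hself ha0 ha in
lemma C_subset_iUnion : ∀ n : ℕ, C ⊆ ⋃ w : Fin n → Bool, J a w := by
  intro n
  induction n with
  | zero =>
    intro x hx
    refine Set.mem_iUnion.2 ⟨fun i => false, ?_⟩
    simpa [J, ep] using hsub hx
  | succ n ih =>
    intro x hx
    rw [hself] at hx
    have key : ∀ (b : Bool) (y : ℝ), y ∈ C →
        x = a * y + (if b then (1 - a) else 0) → x ∈ ⋃ w : Fin (n+1) → Bool, J a w := by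
      intro b y hy hxy
      rcases Set.mem_iUnion.1 (ih hy) with ⟨w, hw⟩
      refine Set.mem_iUnion.2 ⟨Fin.cons b w, ?_⟩
      rcases hw with ⟨h1, h2⟩
      constructor
      · rw [ep_cons, hxy]; nlinarith
      · rw [ep_cons, hxy, pow_succ]; nlinarith
    rcases hx with ⟨y, hy, hxy⟩ | ⟨y, hy, hxy⟩
    · exact key false y hy (by simpa using hxy.symm)
    · exact key true y hy (by simpa using hxy.symm)

include hsub hself ha0 ha in
lemma C_meets_J (hne : C.Nonempty) : ∀ (n : ℕ) (w : Fin n → Bool), (C ∩ J a w).Nonempty := by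
  intro n
  induction n with
  | zero =>
    intro w
    obtain ⟨x, hx⟩ := hne
    exact ⟨x, hx, by simpa [J, ep] using hsub hx⟩
  | succ n ih =>
    intro w
    obtain ⟨p, hpC, hp1, hp2⟩ := ih (Fin.tail w)
    set b := w 0 with hb
    refine ⟨a * p + (if b then (1 - a) else 0), ?_, ?_, ?_⟩
    · rw [hself]
      rcases Bool.eq_false_or_eq_true b with h | h
      · exact Set.mem_union_right _ ⟨p, hpC, by rw [h]; simp⟩
      · exact Set.mem_union_left _ ⟨p, hpC, by rw [h]; simp⟩
    · have : ep a w = ep a (Fin.cons b (Fin.tail w)) := by rw [Fin.cons_self_tail]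
      rw [this, ep_cons]; nlinarith
    · have : ep a w = ep a (Fin.cons b (Fin.tail w)) := by rw [Fin.cons_self_tail]
      rw [this, ep_cons, pow_succ]; nlinarith

end withC

include ha0 ha in
lemma sep_aux {n : ℕ} {w v : Fin (n + 1) → Bool} (h : Fin.init w = Fin.init v)
    (hw : w (Fin.last n) = false) (hv : v (Fin.last n) = true)
    {x y : ℝ} (hx : x ∈ J a w) (hy : y ∈ J a v) :
    a ^ n * (1 - 2 * a) ≤ y - x := by
  have hew := ep_snoc (a := a) w
  have hev := ep_snoc (a := a) v
  rw [hw] at hew; rw [hv] at hev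
  simp at hew hev
  rcases hx with ⟨_, hx2⟩
  rcases hy with ⟨hy1, _⟩
  rw [hew] at hx2; rw [hev, ← h] at hy1
  nlinarith [pow_succ a n, pow_nonneg ha0.le n]

include ha0 ha in
lemma sep {n : ℕ} {w v : Fin (n + 1) → Bool} (h : Fin.init w = Fin.init v) (hwv : w ≠ v)
    {x y : ℝ} (hx : x ∈ J a w) (hy : y ∈ J a v) :
    a ^ n * (1 - 2 * a) ≤ |x - y| := by
  have hlast : w (Fin.last n) ≠ v (Fin.last n) := by
    intro hl
    apply hwv
    funext i
    induction i using Fin.lastCases with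
    | last => exact hl
    | cast i => exact congrFun h i
  cases hwb : w (Fin.last n) <;> cases hvb : v (Fin.last n)
  · exact absurd (hwb.trans hvb.symm) hlast
  · have := sep_aux ha0 ha h hwb hvb hx hy
    rw [abs_sub_comm]
    exact this.trans (le_abs_self _)
  · have := sep_aux ha0 ha h.symm hvb hwb hy hx
    exact this.trans (le_abs_self _)
  · exact absurd (hwb.trans hvb.symm) hlast

/-- level-`N` words whose interval meets `U`. -/
def S (a : ℝ) (N : ℕ) (U : Set ℝ) : Finset (Fin N → Bool) :=
  Finset.univ.filter fun w => (J a w ∩ U).Nonempty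

include ha0 ha in
lemma card_S_le_two : ∀ (n : ℕ) (U : Set ℝ),
    (∀ x ∈ U, ∀ y ∈ U, |x - y| < a ^ n * (1 - 2 * a)) → (S a (n + 1) U).card ≤ 2 := by
  intro n
  induction n with
  | zero =>
    intro U _
    calc (S a 1 U).card ≤ (Finset.univ : Finset (Fin 1 → Bool)).card :=
          Finset.card_filter_le _ _
      _ = 2 := by simp
  | succ n ih =>
    intro U hU
    have hmaps : ∀ w ∈ S a (n + 2) U, Fin.init w ∈ S a (n + 1) U := by
      intro w hw
      rw [S, Finset.mem_filter] at hw ⊢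
      obtain ⟨-, x, hx1, hx2⟩ := hw
      exact ⟨Finset.mem_univ _, x, J_init_subset ha0 ha w hx1, hx2⟩
    have hinj : Set.InjOn (fun w : Fin (n+2) → Bool => Fin.init w) ↑(S a (n + 2) U) := by
      intro w hw v hv hwv
      simp only at hwv
      by_contra hne
      rw [S, Finset.coe_filter] at hw hv
      obtain ⟨-, x, hx1, hx2⟩ := hw
      obtain ⟨-, y, hy1, hy2⟩ := hv
      have := sep ha0 ha hwv hne hx1 hy1
      have := hU x hx2 y hy2
      linarith
    have hU' : ∀ x ∈ U, ∀ y ∈ U, |x - y| < a ^ n * (1 - 2 * a) := by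
      intro x hx y hy
      have h1 := hU x hx y hy
      have h2 : a ^ (n + 1) ≤ a ^ n := by
        have := pow_nonneg ha0.le n
        nlinarith [pow_succ a n]
      nlinarith
    calc (S a (n + 2) U).card ≤ (S a (n + 1) U).card :=
          Finset.card_le_card_of_injOn (fun w => Fin.init w) hmaps hinj
      _ ≤ 2 := ih U hU'

include ha0 ha in
lemma card_S_le_pow {n N : ℕ} (hN : n + 1 ≤ N) (U : Set ℝ)
    (hU : ∀ x ∈ U, ∀ y ∈ U, |x - y| < a ^ n * (1 - 2 * a)) :
    (S a N U).card ≤ 2 ^ (N - n) := by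
  obtain ⟨k, rfl⟩ : ∃ k, N = (n + 1) + k := ⟨N - (n + 1), by omega⟩
  set Φ : (Fin (n + 1 + k) → Bool) → (Fin (n + 1) → Bool) × (Fin k → Bool) :=
    fun w => (fun i => w (Fin.castLE (Nat.le_add_right (n + 1) k) i),
              fun j => w (Fin.natAdd (n + 1) j)) with hΦ
  have hinj : Set.InjOn Φ (S a (n + 1 + k) U) := by
    intro w _ v _ h
    funext i
    induction i using Fin.addCases with
    | left i => exact congrFun (congrArg Prod.fst h) i
    | right j => exact congrFun (congrArg Prod.snd h) j
  have hmaps : ∀ w ∈ S a (n + 1 + k) U, Φ w ∈ (S a (n + 1) U) ×ˢ Finset.univ := by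
    intro w hw
    rw [S, Finset.mem_filter] at hw
    obtain ⟨-, x, hx1, hx2⟩ := hw
    rw [Finset.mem_product]
    refine ⟨?_, Finset.mem_univ _⟩
    rw [S, Finset.mem_filter]
    exact ⟨Finset.mem_univ _, x, J_restrict ha0 ha k w hx1, hx2⟩
  calc (S a (n + 1 + k) U).card ≤ ((S a (n + 1) U) ×ˢ (Finset.univ : Finset (Fin k → Bool))).card :=
        Finset.card_le_card_of_injOn Φ hmaps hinj
    _ = (S a (n + 1) U).card * 2 ^ k := by
        rw [Finset.card_product, Finset.card_univ]
        congr 1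
        simp [Fintype.card_fun]
    _ ≤ 2 * 2 ^ k := by
        have := card_S_le_two ha0 ha n U hU
        exact Nat.mul_le_mul_right _ this
    _ = 2 ^ (n + 1 + k - n) := by
        rw [show n + 1 + k - n = k + 1 by omega, pow_succ]
        ring

include ha0 ha in
lemma finite_cover {C : Set ℝ} (hsub : C ⊆ Set.Icc 0 1)
    (hself : C = (fun x => a * x) '' C ∪ (fun x => a * x + (1 - a)) '' C)
    (hne : C.Nonempty) {d : ℝ} (hd0 : 0 < d) (had : a ^ d = (2:ℝ)⁻¹)
    {ι : Type*} (I : Finset ι) (U : ι → Set ℝ)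
    (hcov : C ⊆ ⋃ i ∈ I, U i) (hop : ∀ i ∈ I, IsOpen (U i))
    (hdiam : ∀ i ∈ I, ∀ x ∈ U i, ∀ y ∈ U i, |x - y| < 1 - 2 * a) :
    ENNReal.ofReal ((a * (1 - 2 * a)) ^ d) ≤ ∑ i ∈ I, EMetric.diam (U i) ^ d := by
  set g : ℝ := 1 - 2 * a with hgdef
  have hg : 0 < g := by rw [hgdef]; linarith
  set P : ι → ℕ → Prop := fun i n => ∀ x ∈ U i, ∀ y ∈ U i, |x - y| < a ^ n * g with hP
  set I' : Finset ι := I.filter (fun i => (U i ∩ C).Nonempty) with hI'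
  have hI'sub : I' ⊆ I := Finset.filter_subset _ _
  -- existence of a scale where P fails
  have hex : ∀ i ∈ I', ∃ n, ¬ P i n := by
    intro i hi
    rw [hI', Finset.mem_filter] at hi
    obtain ⟨hiI, p, hpU, hpC⟩ := hi
    obtain ⟨ε, hε, hball⟩ := Metric.isOpen_iff.1 (hop i hiI) p hpU
    have hqU : p + ε / 2 ∈ U i := by
      apply hball
      rw [Metric.mem_ball, Real.dist_eq]
      rw [show p + ε / 2 - p = ε / 2 by ring, abs_of_pos (by linarith)]
      linarith
    obtain ⟨n, hn⟩ := exists_pow_lt_of_lt_one (x := ε / 2 / g) (y := a)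
      (div_pos (by linarith) hg) (by linarith)
    refine ⟨n, fun hPn => ?_⟩
    have := hPn p hpU (p + ε / 2) hqU
    rw [show p - (p + ε / 2) = -(ε/2) by ring, abs_neg, abs_of_pos (by linarith)] at this
    have h2 : a ^ n * g < ε / 2 := (lt_div_iff₀ hg).1 hn
    linarith
  -- the critical scale
  set m : ι → ℕ := fun i => if h : ∃ n, ¬ P i n then Nat.find h else 0 with hm
  have hP0 : ∀ i ∈ I, P i 0 := by
    intro i hi x hx y hy
    have := hdiam i hi x hx y hy
    rw [pow_zero, one_mul]
    exact this
  have hmfind : ∀ i, ∀ hi : i ∈ I', m i = Nat.find (hex i hi) := by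
    intro i hi
    rw [hm]; simp only [dif_pos (hex i hi)]
  have hm1 : ∀ i ∈ I', 1 ≤ m i := by
    intro i hi
    rw [hmfind i hi]
    rcases Nat.eq_zero_or_pos (Nat.find (hex i hi)) with h | h
    · exact absurd (hP0 i (hI'sub hi)) (by rw [← h]; exact Nat.find_spec (hex i hi))
    · exact h
  have hPspec : ∀ i ∈ I', ¬ P i (m i) := by
    intro i hi
    rw [hmfind i hi]
    exact Nat.find_spec (hex i hi)
  have hPgood : ∀ i ∈ I', P i (m i - 1) := by
    intro i hi
    have h1 := hm1 i hi
    rw [hmfind i hi] at h1 ⊢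
    by_contra hcon
    exact Nat.find_min (hex i hi) (by omega) hcon
  set N : ℕ := I'.sup m with hN
  have hmN : ∀ i ∈ I', m i ≤ N := fun i hi => Finset.le_sup hi
  -- counting
  have hcount : (2 : ℕ) ^ N ≤ ∑ i ∈ I', (S a N (U i)).card := by
    have hsubU : (Finset.univ : Finset (Fin N → Bool)) ⊆
        I'.biUnion (fun i => S a N (U i)) := by
      intro w _
      obtain ⟨p, hpC, hpJ⟩ := C_meets_J ha0 ha hsub hself hne N w
      obtain ⟨i, hiI, hpU⟩ := Set.mem_iUnion₂.1 (hcov hpC)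
      refine Finset.mem_biUnion.2 ⟨i, ?_, ?_⟩
      · rw [hI', Finset.mem_filter]; exact ⟨hiI, p, hpU, hpC⟩
      · rw [S, Finset.mem_filter]; exact ⟨Finset.mem_univ _, p, hpJ, hpU⟩
    calc (2:ℕ) ^ N = (Finset.univ : Finset (Fin N → Bool)).card := by
          simp [Finset.card_univ]
      _ ≤ (I'.biUnion (fun i => S a N (U i))).card := Finset.card_le_card hsubU
      _ ≤ ∑ i ∈ I', (S a N (U i)).card := Finset.card_biUnion_le
  have hcard : ∀ i ∈ I', (S a N (U i)).card ≤ 2 ^ (N - (m i - 1)) := by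
    intro i hi
    refine card_S_le_pow ha0 ha ?_ (U i) (hPgood i hi)
    have := hm1 i hi; have := hmN i hi; omega
  -- real inequality: ∑ (1/2)^(m i - 1) ≥ 1
  have hhalf : (1:ℝ) ≤ ∑ i ∈ I', ((2:ℝ)⁻¹) ^ (m i - 1) := by
    have hc : ((2:ℕ):ℝ) ^ N ≤ ∑ i ∈ I', ((2:ℕ):ℝ) ^ (N - (m i - 1)) := by
      calc ((2:ℕ):ℝ) ^ N ≤ ((∑ i ∈ I', (S a N (U i)).card : ℕ) : ℝ) := by
            exact_mod_cast Nat.cast_le.2 hcount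
        _ = ∑ i ∈ I', (((S a N (U i)).card : ℕ) : ℝ) := by push_cast; ring
        _ ≤ ∑ i ∈ I', ((2:ℕ):ℝ) ^ (N - (m i - 1)) := by
            refine Finset.sum_le_sum fun i hi => ?_
            exact_mod_cast Nat.cast_le.2 (hcard i hi)
    have heq : ∀ i ∈ I', ((2:ℕ):ℝ) ^ (N - (m i - 1)) =
        (2:ℝ) ^ N * ((2:ℝ)⁻¹) ^ (m i - 1) := by
      intro i hi
      have hle : m i - 1 ≤ N := by have := hm1 i hi; have := hmN i hi; omega
      rw [Nat.cast_ofNat, pow_sub₀ (2:ℝ) two_ne_zero hle, inv_pow]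
    rw [Finset.sum_congr rfl heq, ← Finset.mul_sum, Nat.cast_ofNat] at hc
    have h2N : (0:ℝ) < 2 ^ N := by positivity
    nlinarith [hc]
  -- from counting to the sum of diameters
  have hwit : ∀ i ∈ I', ENNReal.ofReal ((a ^ (m i) * g) ^ d) ≤ EMetric.diam (U i) ^ d := by
    intro i hi
    have hspec := hPspec i hi
    simp only [hP] at hspec; push_neg at hspec
    obtain ⟨x, hx, y, hy, hxy⟩ := hspec
    have h1 : ENNReal.ofReal (a ^ (m i) * g) ≤ EMetric.diam (U i) := by
      refine le_trans ?_ (EMetric.edist_le_diam_of_mem hx hy)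
      rw [edist_dist, Real.dist_eq]
      exact ENNReal.ofReal_le_ofReal hxy
    calc ENNReal.ofReal ((a ^ (m i) * g) ^ d)
        = ENNReal.ofReal (a ^ (m i) * g) ^ d := by
          rw [ENNReal.ofReal_rpow_of_pos (by positivity)]
      _ ≤ EMetric.diam (U i) ^ d := ENNReal.rpow_le_rpow h1 hd0.le
  have hrpow : ∀ k : ℕ, ((a ^ k : ℝ)) ^ d = ((2:ℝ)⁻¹) ^ k := by
    intro k
    rw [← Real.rpow_natCast a k, ← Real.rpow_mul ha0.le, mul_comm,
      Real.rpow_mul ha0.le, had, Real.rpow_natCast]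
  have hsum : (a * g) ^ d ≤ ∑ i ∈ I', (a ^ (m i) * g) ^ d := by
    have hterm : ∀ i ∈ I', (a ^ (m i) * g) ^ d =
        ((a * g) ^ d) * ((2:ℝ)⁻¹) ^ (m i - 1) := by
      intro i hi
      have h1 := hm1 i hi
      have : a ^ (m i) = a * a ^ (m i - 1) := by
        conv_lhs => rw [show m i = (m i - 1) + 1 by omega]
        rw [pow_succ]; ring
      rw [this, Real.mul_rpow (by positivity) hg.le, Real.mul_rpow ha0.le (by positivity),
        hrpow, Real.mul_rpow (by positivity) hg.le]
      ring
    rw [Finset.sum_congr rfl hterm, ← Finset.mul_sum]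
    nlinarith [hhalf, Real.rpow_nonneg (by positivity : (0:ℝ) ≤ a * g) d]
  calc ENNReal.ofReal ((a * g) ^ d)
      ≤ ENNReal.ofReal (∑ i ∈ I', (a ^ (m i) * g) ^ d) := ENNReal.ofReal_le_ofReal hsum
    _ = ∑ i ∈ I', ENNReal.ofReal ((a ^ (m i) * g) ^ d) := by
        rw [ENNReal.ofReal_sum_of_nonneg fun i _ => by positivity]
    _ ≤ ∑ i ∈ I', EMetric.diam (U i) ^ d := Finset.sum_le_sum hwit
    _ ≤ ∑ i ∈ I, EMetric.diam (U i) ^ d :=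
        Finset.sum_le_sum_of_subset hI'sub
include ha0 ha in
lemma lower_bound {C : Set ℝ} (hsub : C ⊆ Set.Icc 0 1)
    (hself : C = (fun x => a * x) '' C ∪ (fun x => a * x + (1 - a)) '' C)
    (hne : C.Nonempty) (hcomp : IsCompact C) {d : ℝ}
    (hd0 : 0 < d) (hd1 : d ≤ 1) (had : a ^ d = (2:ℝ)⁻¹) :
    ENNReal.ofReal ((a * (1 - 2 * a)) ^ d) ≤ μH[d] C := by
  set g : ℝ := 1 - 2 * a with hgdef
  have hg : 0 < g := by rw [hgdef]; linarith
  rw [MeasureTheory.Measure.hausdorffMeasure_apply]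
  have h4 : (0:ℝ≥0∞) < ENNReal.ofReal (g / 4) := ENNReal.ofReal_pos.2 (by linarith)
  refine le_trans ?_ (le_iSup₂ (f := fun r (_ : 0 < r) =>
      ⨅ (t : ℕ → Set ℝ) (_ : C ⊆ ⋃ n, t n) (_ : ∀ n, EMetric.diam (t n) ≤ r),
        ∑' n, ⨆ _ : (t n).Nonempty, EMetric.diam (t n) ^ d)
      (ENNReal.ofReal (g / 4)) h4)
  refine le_iInf fun t => le_iInf fun hcov => le_iInf fun hdle => ?_
  refine ENNReal.le_of_forall_pos_le_add fun ε hε hfin => ?_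
  -- thicken the sets
  set δ : ℕ → ℝ := fun n =>
    min (g / 8) ((((ε:ℝ) * (2⁻¹) ^ (n + 1)) ^ (d⁻¹)) / 2) with hδdef
  have hδpos : ∀ n, 0 < δ n := by
    intro n
    refine lt_min (by linarith) ?_
    have : (0:ℝ) < (ε:ℝ) * (2⁻¹) ^ (n + 1) := by positivity
    have := Real.rpow_pos_of_pos this d⁻¹
    linarith
  set V : ℕ → Set ℝ := fun n => Metric.thickening (δ n) (t n) with hV
  have hVopen : ∀ n, IsOpen (V n) := fun n => Metric.isOpen_thickening
  have hVcov : C ⊆ ⋃ n, V n :=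
    hcov.trans (Set.iUnion_mono fun n => Metric.self_subset_thickening (hδpos n) _)
  obtain ⟨F, hF⟩ := hcomp.elim_finite_subcover V hVopen hVcov
  have hVdiam : ∀ n, EMetric.diam (V n) ≤ EMetric.diam (t n) + ENNReal.ofReal (2 * δ n) := by
    intro n
    have h1 : ((δ n).toNNReal : ℝ) = δ n := Real.coe_toNNReal _ (hδpos n).le
    have h2 := Metric.ediam_thickening_le (s := t n) (δ n).toNNReal
    rw [h1] at h2
    have h3 : ENNReal.ofReal (2 * δ n) = 2 * ((δ n).toNNReal : ℝ≥0∞) := by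
      rw [ENNReal.ofReal_mul (by norm_num : (0:ℝ) ≤ 2)]
      congr 1
      simp
    rw [h3]
    exact h2
  have hδle : ∀ n, δ n ≤ g / 8 := fun n => min_le_left _ _
  have hVsmall : ∀ n, ∀ x ∈ V n, ∀ y ∈ V n, |x - y| < g := by
    intro n x hx y hy
    have h1 : EMetric.diam (V n) ≤ ENNReal.ofReal (g / 4) + ENNReal.ofReal (g / 4) := by
      refine (hVdiam n).trans ?_
      exact add_le_add (hdle n)
        (ENNReal.ofReal_le_ofReal (by linarith [hδle n]))
    rw [← ENNReal.ofReal_add (by linarith) (by linarith)] at h1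
    have h2 : edist x y ≤ ENNReal.ofReal (g / 4 + g / 4) :=
      (EMetric.edist_le_diam_of_mem hx hy).trans h1
    rw [edist_dist, Real.dist_eq] at h2
    have h3 := (ENNReal.ofReal_le_ofReal_iff (by linarith)).1 h2
    linarith
  have hmain := finite_cover ha0 ha hsub hself hne hd0 had F V hF
    (fun i _ => hVopen i) (fun i _ => hVsmall i)
  -- per-term estimate
  have hterm : ∀ n, EMetric.diam (V n) ^ d ≤
      (⨆ _ : (t n).Nonempty, EMetric.diam (t n) ^ d) +
        ENNReal.ofReal ((ε:ℝ) * (2⁻¹) ^ (n + 1)) := by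
    intro n
    rcases Set.eq_empty_or_nonempty (t n) with h | h
    · rw [hV]
      dsimp only
      rw [h, Metric.thickening_empty, EMetric.diam, EMetric.diam_empty, ENNReal.zero_rpow_of_pos hd0]
      exact zero_le
    · rw [iSup_pos h]
      have h1 : EMetric.diam (V n) ^ d ≤
          (EMetric.diam (t n) + ENNReal.ofReal (2 * δ n)) ^ d :=
        ENNReal.rpow_le_rpow (hVdiam n) hd0.le
      refine h1.trans ?_
      refine (ENNReal.rpow_add_le_add_rpow _ _ hd0.le hd1).trans ?_
      gcongr
      rw [ENNReal.ofReal_rpow_of_pos (by linarith [hδpos n])]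
      refine ENNReal.ofReal_le_ofReal ?_
      have h2 : 2 * δ n ≤ ((ε:ℝ) * (2⁻¹) ^ (n + 1)) ^ (d⁻¹) := by
        have hmr : δ n ≤ (((ε:ℝ) * (2⁻¹) ^ (n + 1)) ^ (d⁻¹)) / 2 :=
          min_le_right _ _
        linarith
      calc (2 * δ n) ^ d ≤ (((ε:ℝ) * (2⁻¹) ^ (n + 1)) ^ (d⁻¹)) ^ d :=
            Real.rpow_le_rpow (by linarith [hδpos n]) h2 hd0.le
        _ = (ε:ℝ) * (2⁻¹) ^ (n + 1) := Real.rpow_inv_rpow (by positivity) hd0.ne'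
  -- sum up
  have hgeom : ∑' n : ℕ, ENNReal.ofReal ((ε:ℝ) * (2⁻¹) ^ (n + 1)) = (ε : ℝ≥0∞) := by
    have h2inv : ENNReal.ofReal ((2:ℝ)⁻¹) = (2:ℝ≥0∞)⁻¹ := by
      rw [ENNReal.ofReal_inv_of_pos (by norm_num), ENNReal.ofReal_ofNat]
    have h1 : ∀ n : ℕ, ENNReal.ofReal ((ε:ℝ) * (2⁻¹) ^ (n + 1)) =
        (ε : ℝ≥0∞) * (2⁻¹) ^ n * 2⁻¹ := by
      intro n
      rw [ENNReal.ofReal_mul ε.coe_nonneg, ENNReal.ofReal_coe_nnreal,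
        ENNReal.ofReal_pow (by norm_num), h2inv, pow_succ, ← mul_assoc]
    simp_rw [h1]
    rw [ENNReal.tsum_mul_right, ENNReal.tsum_mul_left, ENNReal.tsum_geometric,
      ENNReal.one_sub_inv_two, mul_assoc]
    rw [inv_inv]
    rw [show ((2:ℝ≥0∞) * 2⁻¹) = 1 by
      rw [ENNReal.mul_inv_cancel] <;> norm_num]
    rw [mul_one]
  calc ENNReal.ofReal ((a * g) ^ d)
      ≤ ∑ i ∈ F, EMetric.diam (V i) ^ d := hmain
    _ ≤ ∑' n, EMetric.diam (V n) ^ d := ENNReal.sum_le_tsum F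
    _ ≤ ∑' n, ((⨆ _ : (t n).Nonempty, EMetric.diam (t n) ^ d) +
          ENNReal.ofReal ((ε:ℝ) * (2⁻¹) ^ (n + 1))) := ENNReal.tsum_le_tsum hterm
    _ = (∑' n, ⨆ _ : (t n).Nonempty, EMetric.diam (t n) ^ d) + (ε : ℝ≥0∞) := by
        rw [ENNReal.tsum_add, hgeom]

include ha0 in
lemma rpow_pow {d : ℝ} (had : a ^ d = (2:ℝ)⁻¹) (k : ℕ) :
    ((a ^ k : ℝ)) ^ d = ((2:ℝ)⁻¹) ^ k := by
  rw [← Real.rpow_natCast a k, ← Real.rpow_mul ha0.le, mul_comm,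
    Real.rpow_mul ha0.le, had, Real.rpow_natCast]

include ha0 ha in
lemma upper_bound {C : Set ℝ} (hsub : C ⊆ Set.Icc 0 1)
    (hself : C = (fun x => a * x) '' C ∪ (fun x => a * x + (1 - a)) '' C)
    {d : ℝ} (hd0 : 0 < d) (had : a ^ d = (2:ℝ)⁻¹) :
    μH[d] C ≤ 1 := by
  have hcov := C_subset_iUnion ha0 ha hsub hself
  have hmain := MeasureTheory.Measure.hausdorffMeasure_le_liminf_sum d C
    (l := Filter.atTop) (ι := fun n : ℕ => Fin n → Bool)
    (fun n : ℕ => ENNReal.ofReal (a ^ n))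
    (by
      have h1 : Filter.Tendsto (fun n : ℕ => a ^ n) Filter.atTop (nhds 0) :=
        tendsto_pow_atTop_nhds_zero_of_lt_one ha0.le (by linarith)
      have h2 := ENNReal.tendsto_ofReal (f := Filter.atTop) h1
      rwa [ENNReal.ofReal_zero] at h2)
    (fun n w => J a w)
    (Filter.Eventually.of_forall fun n => by
      intro w
      show EMetric.diam (J a w) ≤ _
      rw [J, EMetric.diam, Real.ediam_Icc]
      simp)
    (Filter.Eventually.of_forall fun n => hcov n)
  refine hmain.trans ?_
  have h2inv : ENNReal.ofReal ((2:ℝ)⁻¹) = (2:ℝ≥0∞)⁻¹ := by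
    rw [ENNReal.ofReal_inv_of_pos (by norm_num), ENNReal.ofReal_ofNat]
  have hterm : ∀ n : ℕ, ∑ w : Fin n → Bool, EMetric.diam (J a w) ^ d = 1 := by
    intro n
    have hdiam : ∀ w : Fin n → Bool, EMetric.diam (J a w) = ENNReal.ofReal (a ^ n) := by
      intro w
      rw [J, EMetric.diam, Real.ediam_Icc]
      simp
    calc ∑ w : Fin n → Bool, EMetric.diam (J a w) ^ d
        = ∑ _w : Fin n → Bool, ENNReal.ofReal (a ^ n) ^ d := by
          exact Finset.sum_congr rfl fun w _ => by rw [hdiam w]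
      _ = (2 ^ n : ℕ) * ENNReal.ofReal (a ^ n) ^ d := by
          rw [Finset.sum_const, Finset.card_univ]
          have hcard : Fintype.card (Fin n → Bool) = 2 ^ n := by
            simp [Fintype.card_fun]
          rw [hcard, nsmul_eq_mul]
      _ = 1 := by
          rw [ENNReal.ofReal_rpow_of_pos (by positivity), rpow_pow ha0 had,
            ENNReal.ofReal_pow (by norm_num), h2inv]
          rw [Nat.cast_pow, Nat.cast_ofNat, ← mul_pow, ENNReal.mul_inv_cancel
            (by norm_num) (by norm_num), one_pow]
  simp only [EMetric.diam] at hterm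
  simp_rw [hterm]
  rw [Filter.liminf_const]

end

end CantorStmt11

open Real in
/-- The self-similar Cantor set generated by `x ↦ a·x` and `x ↦ a·x + (1-a)`,
`0 < a < 1/2`, has Hausdorff dimension `log 2 / log (1/a)`; for `a = 1/3` this is
the middle-thirds Cantor set with dimension `log 2 / log 3`. -/
theorem stmt_11 (a : ℝ) (ha0 : 0 < a) (ha : a < 1 / 2) (C : Set ℝ)
    (hne : C.Nonempty) (hcomp : IsCompact C) (hsub : C ⊆ Set.Icc 0 1)
    (hself : C = (fun x => a * x) '' C ∪ (fun x => a * x + (1 - a)) '' C) :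
    dimH C = ENNReal.ofReal (Real.log 2 / Real.log a⁻¹) := by
  set d : ℝ := Real.log 2 / Real.log a⁻¹ with hd
  have hla : Real.log a < 0 := Real.log_neg ha0 (by linarith)
  have hloginv : Real.log a⁻¹ = -Real.log a := Real.log_inv a
  have hl2 : 0 < Real.log 2 := Real.log_pos one_lt_two
  have hlpos : 0 < Real.log a⁻¹ := by rw [hloginv]; linarith
  have hd0 : 0 < d := div_pos hl2 hlpos
  have hd1 : d ≤ 1 := by
    rw [hd, div_le_one hlpos]
    refine Real.log_le_log (by norm_num) ?_
    rw [inv_eq_one_div]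
    exact (le_div_iff₀ ha0).2 (by linarith)
  have hlane : Real.log a ≠ 0 := ne_of_lt hla
  have had : a ^ d = (2:ℝ)⁻¹ := by
    rw [Real.rpow_def_of_pos ha0]
    have hexp : Real.log a * d = -Real.log 2 := by
      rw [hd, hloginv]
      field_simp
    rw [hexp, Real.exp_neg, Real.exp_log (by norm_num : (0:ℝ) < 2)]
  have hlow := CantorStmt11.lower_bound ha0 ha hsub hself hne hcomp hd0 hd1 had
  have hupp := CantorStmt11.upper_bound ha0 ha hsub hself hd0 had
  set D : ℝ≥0 := d.toNNReal with hDdef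
  have hD : ((D : ℝ≥0) : ℝ) = d := Real.coe_toNNReal _ hd0.le
  have hne0 : μH[(D : ℝ)] C ≠ 0 := by
    rw [hD]
    intro h0
    rw [h0] at hlow
    have : (0:ℝ) < (a * (1 - 2 * a)) ^ d :=
      Real.rpow_pos_of_pos (by nlinarith) d
    exact absurd (nonpos_iff_eq_zero.1 hlow) (ENNReal.ofReal_pos.2 this).ne'
  have hnetop : μH[(D : ℝ)] C ≠ ⊤ := by
    rw [hD]
    exact (hupp.trans_lt (by norm_num)).ne
  have hdim := dimH_of_hausdorffMeasure_ne_zero_ne_top hne0 hnetop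
  rw [hdim]
  rfl
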